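/- Let G : ℝ → ℂ be continuously differentiable with compact support, λ₀ ∈ ℝ, c > 0, and K > 0. Then there exists a constant C > 0 such that for every g ∈ (0, e⁻¹], every Q ≥ 1, and every λ₁ ∈ ℂ with |Re λ₁| ≤ K and Im λ₁ ≤ −c·g², one has |∫_ℝ G(r) · e^{i Q (r + λ₀ − λ₁)} / (r + λ₀ − λ₁) dr| ≤ C / (Q · g²). -/

import Mathlib

open MeasureTheory Real

lemma aux_integral_deriv_eq_zero {f : ℝ → ℂ} (hf : ContDiff ℝ 1 f)
    (h2f : HasCompactSupport f) : ∫ x : ℝ, deriv f x = 0 := by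
  have h1 := HasCompactSupport.integral_Iic_deriv_eq hf h2f 0
  have h2 := HasCompactSupport.integral_Ioi_deriv_eq hf h2f 0
  have hint : Integrable (deriv f) :=
    (hf.continuous_deriv le_rfl).integrable_of_hasCompactSupport h2f.deriv
  rw [← intervalIntegral.integral_Iic_add_Ioi (b := 0) hint.integrableOn hint.integrableOn, h1, h2]
  ring

lemma aux_sq_eq {ε : ℝ} (hε : 0 < ε) :
    (fun x : ℝ => (x ^ 2 + ε ^ 2)⁻¹) = fun x : ℝ => (ε ^ 2)⁻¹ * (1 + (x / ε) ^ 2)⁻¹ := by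
  funext x
  rw [← mul_inv]
  congr 1
  field_simp
  ring

lemma aux_poisson_integrable {b ε : ℝ} (hε : 0 < ε) :
    Integrable fun x : ℝ => ((x + b) ^ 2 + ε ^ 2)⁻¹ := by
  have h1 : Integrable fun x : ℝ => (x ^ 2 + ε ^ 2)⁻¹ := by
    rw [aux_sq_eq hε]
    exact (integrable_inv_one_add_sq.comp_div hε.ne').const_mul _
  exact h1.comp_add_right b

lemma aux_poisson_integral {b ε : ℝ} (hε : 0 < ε) :
    ∫ x : ℝ, ((x + b) ^ 2 + ε ^ 2)⁻¹ = π / ε := by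
  rw [integral_add_right_eq_self (fun x : ℝ => (x ^ 2 + ε ^ 2)⁻¹) b, aux_sq_eq hε,
    integral_const_mul, Measure.integral_comp_div (fun y : ℝ => (1 + y ^ 2)⁻¹) ε,
    integral_univ_inv_one_add_sq, abs_of_pos hε, smul_eq_mul]
  field_simp

set_option maxHeartbeats 1000000 in
/-- Bound on the remainder term r₁(Q) in the proof of Lemma 5.7 (equation (5.78)). -/
theorem stmt_7 (G : ℝ → ℂ) (hG : ContDiff ℝ 1 G) (hsupp : HasCompactSupport G)
    (lam0 c K : ℝ) (hc : 0 < c) (hK : 0 < K) :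
    ∃ C : ℝ, 0 < C ∧ ∀ g : ℝ, 0 < g → g ≤ Real.exp (-1) → ∀ Q : ℝ, 1 ≤ Q →
      ∀ lam1 : ℂ, |lam1.re| ≤ K → lam1.im ≤ -c * g ^ 2 →
        ‖(∫ r : ℝ,
            G r * Complex.exp (Complex.I * (Q : ℂ) * ((r : ℂ) + (lam0 : ℂ) - lam1)) /
              ((r : ℂ) + (lam0 : ℂ) - lam1))‖
          ≤ C / (Q * g ^ 2) := by
  have hGc : Continuous G := hG.continuous
  have hG'c : Continuous (deriv G) := hG.continuous_deriv le_rfl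
  have hG'supp : HasCompactSupport (deriv G) := hsupp.deriv
  obtain ⟨M₀, hM₀⟩ := hsupp.exists_bound_of_continuous hGc
  set M : ℝ := max M₀ 0 with hMdef
  have hM : ∀ x, ‖G x‖ ≤ M := fun x => (hM₀ x).trans (le_max_left _ _)
  have hM0 : 0 ≤ M := le_max_right _ _
  set A : ℝ := ∫ x : ℝ, ‖deriv G x‖ with hAdef
  have hA0 : 0 ≤ A := integral_nonneg fun x => norm_nonneg _
  have hAint : Integrable (fun x : ℝ => ‖deriv G x‖) :=
    hG'c.norm.integrable_of_hasCompactSupport hG'supp.norm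
  clear_value M
  refine ⟨(A + π * M) / c + 1, by positivity, ?_⟩
  intro g hg hge Q hQ lam1 hre him
  have hQ0 : (0 : ℝ) < Q := lt_of_lt_of_le one_pos hQ
  set ε : ℝ := c * g ^ 2 with hεdef
  have hε : 0 < ε := by positivity
  set z : ℝ → ℂ := fun r => (r : ℂ) + (lam0 : ℂ) - lam1 with hzdef
  have hzim : ∀ r, (z r).im = -lam1.im := by intro r; simp [hzdef]
  have hzre : ∀ r, (z r).re = r + lam0 - lam1.re := by intro r; simp [hzdef]
  have himε : ∀ r, ε ≤ (z r).im := by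
    intro r; rw [hzim, hεdef]; linarith [him]
  have hz_ne : ∀ r, z r ≠ 0 := by
    intro r h
    have h2 := himε r
    rw [h] at h2
    simp only [Complex.zero_im] at h2
    linarith
  have hIQ : Complex.I * (Q : ℂ) ≠ 0 := by
    simp [Complex.ext_iff, hQ0.ne']
  set e : ℝ → ℂ := fun r => Complex.exp (Complex.I * (Q : ℂ) * z r) with hedef
  have he_bound : ∀ r, ‖e r‖ ≤ 1 := by
    intro r
    simp only [hedef, Complex.norm_exp]
    rw [Real.exp_le_one_iff]
    have h1 : (Complex.I * (Q : ℂ) * z r).re = -(Q * (z r).im) := by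
      simp [Complex.mul_re, Complex.mul_im]
    rw [h1]
    have h2 := himε r
    nlinarith
  have hzabs : ∀ r, ε ≤ ‖z r‖ := by
    intro r
    calc ε ≤ (z r).im := himε r
      _ ≤ |(z r).im| := le_abs_self _
      _ ≤ ‖z r‖ := Complex.abs_im_le_norm _
  -- derivatives
  have hz' : ∀ r : ℝ, HasDerivAt z 1 r := by
    intro r
    have := ((Complex.ofRealCLM.hasDerivAt (x := r)).add_const (lam0 : ℂ)).sub_const lam1
    simpa [hzdef] using this
  have hG' : ∀ r : ℝ, HasDerivAt G (deriv G r) r :=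
    fun r => (hG.differentiable one_ne_zero r).hasDerivAt
  set f : ℝ → ℂ := fun r => G r * e r / z r with hfdef
  set f₁ : ℝ → ℂ := fun r => deriv G r * e r / z r with hf₁def
  set f₂ : ℝ → ℂ := fun r => G r * e r / z r ^ 2 with hf₂def
  set c₁ : ℂ := (Complex.I * (Q : ℂ))⁻¹ with hc₁def
  set F : ℝ → ℂ := fun r => c₁ * (G r * (e r * (z r)⁻¹)) with hFdef
  have key : ∀ r, HasDerivAt F (f r + c₁ * f₁ r - c₁ * f₂ r) r := by
    intro r
    have hze : HasDerivAt (fun s : ℝ => Complex.I * (Q : ℂ) * z s) (Complex.I * (Q : ℂ) * 1) r :=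
      (hz' r).const_mul _
    have he' : HasDerivAt e (Complex.exp (Complex.I * (Q : ℂ) * z r) * (Complex.I * (Q : ℂ) * 1)) r := by
      rw [hedef]; exact hze.cexp
    have hinv' : HasDerivAt (fun s => (z s)⁻¹) (-(z r ^ 2)⁻¹ * 1) r := by
      simpa [Function.comp_def] using (hasDerivAt_inv (hz_ne r)).comp r (hz' r)
    have hprod := ((hG' r).mul (he'.mul hinv')).const_mul c₁
    convert hprod using 1
    · rfl
    · rfl
    have hcancel : c₁ * (Complex.I * (Q : ℂ)) = 1 := inv_mul_cancel₀ hIQ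
    simp only [hfdef, hf₁def, hf₂def, hedef, div_eq_mul_inv, mul_one, Pi.mul_apply]
    linear_combination
      (-(G r * Complex.exp (Complex.I * (Q : ℂ) * z r) * (z r)⁻¹)) * hcancel
  -- continuity / integrability
  have hzC : Continuous z := by
    rw [hzdef]; continuity
  have heC : Continuous e := by
    rw [hedef]; exact Complex.continuous_exp.comp (continuous_const.mul hzC)
  have hfC : Continuous f := by
    rw [hfdef]; exact (hGc.mul heC).div hzC hz_ne
  have hf₁C : Continuous f₁ := by
    rw [hf₁def]; exact (hG'c.mul heC).div hzC hz_ne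
  have hf₂C : Continuous f₂ := by
    rw [hf₂def]
    exact (hGc.mul heC).div (hzC.pow 2) fun r => pow_ne_zero 2 (hz_ne r)
  have hfsupp : HasCompactSupport f := by
    refine hsupp.mono fun x hx => ?_
    simp only [Function.mem_support] at hx ⊢
    intro hGx
    exact hx (by simp [hfdef, hGx])
  have hf₁supp : HasCompactSupport f₁ := by
    refine hG'supp.mono fun x hx => ?_
    simp only [Function.mem_support] at hx ⊢
    intro hGx
    exact hx (by simp [hf₁def, hGx])
  have hf₂supp : HasCompactSupport f₂ := by
    refine hsupp.mono fun x hx => ?_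
    simp only [Function.mem_support] at hx ⊢
    intro hGx
    exact hx (by simp [hf₂def, hGx])
  have hfint : Integrable f := hfC.integrable_of_hasCompactSupport hfsupp
  have hf₁int : Integrable f₁ := hf₁C.integrable_of_hasCompactSupport hf₁supp
  have hf₂int : Integrable f₂ := hf₂C.integrable_of_hasCompactSupport hf₂supp
  -- F is C¹ with compact support
  have hzCD : ContDiff ℝ 1 z := by
    rw [hzdef]
    exact (Complex.ofRealCLM.contDiff.add contDiff_const).sub contDiff_const
  have hFCD : ContDiff ℝ 1 F := by
    rw [hFdef, hedef]
    exact contDiff_const.mul (hG.mul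
      ((Complex.contDiff_exp.comp (contDiff_const.mul hzCD)).mul (hzCD.inv hz_ne)))
  have hFsupp : HasCompactSupport F := by
    refine hsupp.mono fun x hx => ?_
    simp only [Function.mem_support] at hx ⊢
    intro hGx
    exact hx (by simp [hFdef, hGx])
  have hderivF : deriv F = fun r => f r + c₁ * f₁ r - c₁ * f₂ r :=
    funext fun r => (key r).deriv
  have hzero : ∫ r : ℝ, (f r + c₁ * f₁ r - c₁ * f₂ r) = 0 := by
    rw [← hderivF]
    exact aux_integral_deriv_eq_zero hFCD hFsupp
  have hsplit : ∫ r : ℝ, (f r + c₁ * f₁ r - c₁ * f₂ r)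
      = (∫ r : ℝ, f r) + c₁ * (∫ r : ℝ, f₁ r) - c₁ * (∫ r : ℝ, f₂ r) := by
    have h1 : ∫ r : ℝ, (f r + c₁ * f₁ r - c₁ * f₂ r)
        = (∫ r : ℝ, (f r + c₁ * f₁ r)) - ∫ r : ℝ, c₁ * f₂ r :=
      integral_sub (hfint.add (hf₁int.const_mul c₁)) (hf₂int.const_mul c₁)
    have h2 : ∫ r : ℝ, (f r + c₁ * f₁ r) = (∫ r : ℝ, f r) + ∫ r : ℝ, c₁ * f₁ r :=
      integral_add hfint (hf₁int.const_mul c₁)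
    rw [h1, h2, integral_const_mul, integral_const_mul]
  have hfeq : (∫ r : ℝ, f r) = c₁ * (∫ r : ℝ, f₂ r) - c₁ * (∫ r : ℝ, f₁ r) := by
    rw [hsplit] at hzero
    linear_combination hzero
  -- norm bounds
  have hb1 : ‖∫ r : ℝ, f₁ r‖ ≤ A / ε := by
    have hboundint : Integrable (fun r : ℝ => ‖deriv G r‖ / ε) := hAint.div_const ε
    have hpt : ∀ r, ‖f₁ r‖ ≤ ‖deriv G r‖ / ε := fun r =>
      calc ‖f₁ r‖ = ‖deriv G r‖ * ‖e r‖ / ‖z r‖ := by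
            simp only [hf₁def, norm_div, norm_mul]
        _ ≤ ‖deriv G r‖ / ε :=
            div_le_div₀ (norm_nonneg _)
              (mul_le_of_le_one_right (norm_nonneg _) (he_bound r)) hε (hzabs r)
    have h := norm_integral_le_of_norm_le hboundint (Filter.Eventually.of_forall hpt)
    rw [integral_div] at h
    exact h
  have hb2 : ‖∫ r : ℝ, f₂ r‖ ≤ M * (π / ε) := by
    have hboundint : Integrable (fun r : ℝ => M * ((r + (lam0 - lam1.re)) ^ 2 + ε ^ 2)⁻¹) :=
      (aux_poisson_integrable hε).const_mul M
    have hpt : ∀ r, ‖f₂ r‖ ≤ M * ((r + (lam0 - lam1.re)) ^ 2 + ε ^ 2)⁻¹ := by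
      intro r
      have hden : (r + (lam0 - lam1.re)) ^ 2 + ε ^ 2 ≤ ‖z r‖ ^ 2 := by
        have h1 : ‖z r‖ ^ 2 = (z r).re ^ 2 + (z r).im ^ 2 := by
          rw [Complex.sq_norm, Complex.normSq_apply]; ring
        rw [h1, hzre]
        have h2 := himε r
        nlinarith
      calc ‖f₂ r‖ = ‖G r‖ * ‖e r‖ / ‖z r‖ ^ 2 := by
            simp only [hf₂def, norm_div, norm_mul, norm_pow]
        _ ≤ M / ((r + (lam0 - lam1.re)) ^ 2 + ε ^ 2) := by
            apply div_le_div₀ hM0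
              (mul_le_of_le_one_right (norm_nonneg _) (he_bound r) |>.trans (hM r))
              (by positivity) hden
        _ = M * ((r + (lam0 - lam1.re)) ^ 2 + ε ^ 2)⁻¹ := by rw [div_eq_mul_inv]
    have h := norm_integral_le_of_norm_le hboundint (Filter.Eventually.of_forall hpt)
    rw [integral_const_mul, aux_poisson_integral hε] at h
    exact h
  have hc₁norm : ‖c₁‖ = Q⁻¹ := by
    rw [hc₁def, norm_inv]
    simp [abs_of_pos hQ0]
  have hnorm : ‖∫ r : ℝ, f r‖ ≤ Q⁻¹ * (M * (π / ε)) + Q⁻¹ * (A / ε) := by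
    rw [hfeq]
    calc ‖c₁ * (∫ r : ℝ, f₂ r) - c₁ * (∫ r : ℝ, f₁ r)‖
        ≤ ‖c₁ * (∫ r : ℝ, f₂ r)‖ + ‖c₁ * (∫ r : ℝ, f₁ r)‖ := norm_sub_le _ _
      _ = ‖c₁‖ * ‖∫ r : ℝ, f₂ r‖ + ‖c₁‖ * ‖∫ r : ℝ, f₁ r‖ := by rw [norm_mul, norm_mul]
      _ ≤ Q⁻¹ * (M * (π / ε)) + Q⁻¹ * (A / ε) := by
          rw [hc₁norm]
          have hQi : (0:ℝ) ≤ Q⁻¹ := by positivity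
          exact add_le_add (mul_le_mul_of_nonneg_left hb2 hQi)
            (mul_le_mul_of_nonneg_left hb1 hQi)
  calc ‖(∫ r : ℝ,
          G r * Complex.exp (Complex.I * (Q : ℂ) * ((r : ℂ) + (lam0 : ℂ) - lam1)) /
            ((r : ℂ) + (lam0 : ℂ) - lam1))‖
      = ‖∫ r : ℝ, f r‖ := by
        simp only [hfdef, hedef, hzdef]
    _ ≤ Q⁻¹ * (M * (π / ε)) + Q⁻¹ * (A / ε) := hnorm
    _ = (A + π * M) / c / (Q * g ^ 2) := by
        clear_value A
        rw [hεdef]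
        field_simp
        ring
    _ ≤ ((A + π * M) / c + 1) / (Q * g ^ 2) := by
        have hpos : (0:ℝ) < Q * g ^ 2 := by positivity
        exact (div_le_div_iff_of_pos_right hpos).mpr (by linarith)
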